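/- For any K ≠ 0 and b > 0, the cubic equation λ³ = λ² + K²/(6b²) has exactly one real root λ₁, and it satisfies λ₁ > 1; the other two roots λ₂, λ₃ are complex conjugates with Re(λ₂) = Re(λ₃) = (1 − λ₁)/2 < 0. -/
import Mathlib


/-- for `K ≠ 0`, `b > 0`, the cubic `λ³ = λ² + K²/(6b²)` has a
unique real root `λ₁`, which satisfies `λ₁ > 1`; every other complex root `z`
is nonreal, has `Re z = (1 − λ₁)/2 < 0`, and its conjugate is also a root. -/
theorem stmt8 (K b : ℝ) (hK : K ≠ 0) (hb : 0 < b) :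
    ∃ lam1 : ℝ, lam1 > 1 ∧ lam1 ^ 3 = lam1 ^ 2 + K ^ 2 / (6 * b ^ 2) ∧
      (∀ x : ℝ, x ^ 3 = x ^ 2 + K ^ 2 / (6 * b ^ 2) → x = lam1) ∧
      (∀ z : ℂ, z ^ 3 = z ^ 2 + (K : ℂ) ^ 2 / (6 * (b : ℂ) ^ 2) → z ≠ (lam1 : ℂ) →
        z.im ≠ 0 ∧ z.re = (1 - lam1) / 2 ∧ z.re < 0 ∧
        (starRingEnd ℂ z) ^ 3 = (starRingEnd ℂ z) ^ 2 + (K : ℂ) ^ 2 / (6 * (b : ℂ) ^ 2)) := by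
  set c : ℝ := K ^ 2 / (6 * b ^ 2) with hc_def
  have hc : 0 < c := by positivity
  -- existence of a real root in [1, 2+c]
  have hexists : ∃ x ∈ Set.Icc (1 : ℝ) (2 + c), (fun x : ℝ => x ^ 3 - x ^ 2 - c) x = 0 := by
    have hle : (1 : ℝ) ≤ 2 + c := by linarith
    have hcont : ContinuousOn (fun x : ℝ => x ^ 3 - x ^ 2 - c) (Set.Icc 1 (2 + c)) := by
      fun_prop
    have hsub := intermediate_value_Icc hle hcont
    have h0 : (0 : ℝ) ∈ Set.Icc ((1:ℝ) ^ 3 - 1 ^ 2 - c) ((2 + c) ^ 3 - (2 + c) ^ 2 - c) := by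
      constructor
      · nlinarith
      · nlinarith [sq_nonneg c, sq_nonneg (c + 1)]
    obtain ⟨x, hx, hfx⟩ := hsub h0
    exact ⟨x, hx, hfx⟩
  obtain ⟨lam1, hmem, hroot0⟩ := hexists
  have hroot : lam1 ^ 3 = lam1 ^ 2 + c := by
    have := hroot0
    simp only at this
    linarith
  -- any real root is > 1
  have hgt : ∀ x : ℝ, x ^ 3 = x ^ 2 + c → 1 < x := by
    intro x hx
    by_contra h
    push_neg at h
    nlinarith [sq_nonneg x]
  have hlam1 : 1 < lam1 := hgt lam1 hroot
  -- uniqueness of real root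
  have huniq : ∀ x : ℝ, x ^ 3 = x ^ 2 + c → x = lam1 := by
    intro x hx
    have hx1 : 1 < x := hgt x hx
    have hfac : (x - lam1) * (x ^ 2 + x * lam1 + lam1 ^ 2 - x - lam1) = 0 := by
      nlinarith [hx, hroot]
    have hpos : 0 < x ^ 2 + x * lam1 + lam1 ^ 2 - x - lam1 := by nlinarith
    have := mul_eq_zero.mp hfac
    rcases this with h | h
    · linarith
    · linarith
  refine ⟨lam1, hlam1, hroot, huniq, ?_⟩
  intro z hz hzne
  -- the quadratic factor
  have hq : z ^ 2 + ((lam1 : ℂ) - 1) * z + ((lam1 : ℂ) ^ 2 - lam1) = 0 := by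
    have hl : (lam1 : ℂ) ^ 3 = (lam1 : ℂ) ^ 2 + (K : ℂ) ^ 2 / (6 * (b : ℂ) ^ 2) := by
      have h : ((lam1 : ℂ)) ^ 3 = ((lam1 : ℂ)) ^ 2 + (c : ℂ) := by
        exact_mod_cast congrArg Complex.ofReal hroot
      rw [h]
      congr 1
      rw [hc_def]
      push_cast
      ring
    have hfac : (z - lam1) * (z ^ 2 + ((lam1 : ℂ) - 1) * z + ((lam1 : ℂ) ^ 2 - lam1)) = 0 := by
      have h1 : z ^ 3 - z ^ 2 = (lam1 : ℂ) ^ 3 - (lam1 : ℂ) ^ 2 := by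
        rw [hz, hl]; ring
      linear_combination h1
    rcases mul_eq_zero.mp hfac with h | h
    · exact absurd (by linear_combination h) hzne
    · exact h
  -- z is not real
  have him : z.im ≠ 0 := by
    intro h0
    apply hzne
    have hzre : z = (z.re : ℂ) := by
      exact Complex.ext_iff.mpr ⟨by simp, by simp [h0]⟩
    have : (z.re : ℝ) ^ 3 = z.re ^ 2 + c := by
      have := hz
      rw [hzre] at this
      have h2 : ((z.re ^ 3 : ℝ) : ℂ) = ((z.re ^ 2 + c : ℝ) : ℂ) := by
        push_cast [hc_def]
        convert this using 2
      exact_mod_cast h2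
    rw [hzre, huniq z.re this]
  -- imaginary part of the quadratic gives Re z
  have himpart : z.re * z.im + z.im * z.re + (lam1 - 1) * z.im = 0 := by
    have := congrArg Complex.im hq
    simpa [pow_two, Complex.add_im, Complex.mul_im, Complex.mul_re, Complex.sub_im,
      Complex.ofReal_im, Complex.ofReal_re] using this
  have hre : z.re = (1 - lam1) / 2 := by
    have h2 : z.im * (2 * z.re + (lam1 - 1)) = 0 := by linear_combination himpart
    rcases mul_eq_zero.mp h2 with h | h
    · exact absurd h him
    · linarith
  refine ⟨him, hre, by rw [hre]; linarith, ?_⟩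
  have := congrArg (starRingEnd ℂ) hz
  simpa [map_pow, map_add, map_div₀, map_mul, Complex.conj_ofReal, map_ofNat] using this
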